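/- arXiv:1809.08220 — 2 statements merged into one kernel-verified Lean document; each statement's English description precedes it below -/
import Mathlib

section
/- Let G be a disconnected graph of order n all of whose connected components are non-trivial (have at least 2 vertices), and let G₁ be a component of minimum order k. Then the set V(G∘Ḡ) \ V(G₁), i.e., all vertices of the complementary prism except the vertices of G₁ on the G-side, is a convex set of G∘Ḡ in the geodetic convexity. -/
open SimpleGraph

/-- The complementary prism `G ∘ Ḡ`: left copies (`Sum.inl`) form `G`,
right copies (`Sum.inr`) form the complement `Gᶜ`, and each `inl v` is
matched to `inr v`. -/
def compPrism {V : Type*} (G : SimpleGraph V) : SimpleGraph (V ⊕ V) where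
  Adj x y :=
    match x, y with
    | Sum.inl a, Sum.inl b => G.Adj a b
    | Sum.inr a, Sum.inr b => Gᶜ.Adj a b
    | Sum.inl a, Sum.inr b => a = b
    | Sum.inr a, Sum.inl b => a = b
  symm := ⟨by
    rintro (a | a) (b | b) h <;> simp_all [compl_adj, adj_comm, eq_comm]⟩
  loopless := ⟨by
    rintro (a | a) h <;> simp_all⟩

/-- `v` lies on some shortest `u`-`w` path in `G`. -/
def inInterval {V : Type*} (G : SimpleGraph V) (u w v : V) : Prop :=
  ∃ p : G.Walk u w, p.IsPath ∧ p.length = G.dist u w ∧ v ∈ p.support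

/-- A set is geodesically convex if it contains every vertex on any shortest
path between two of its vertices. -/
def IsGeodConvex {V : Type*} (G : SimpleGraph V) (S : Set V) : Prop :=
  ∀ u ∈ S, ∀ w ∈ S, ∀ v, inInterval G u w v → v ∈ S

/-- The geodesic convex hull of a set of vertices. -/
def geodHull {V : Type*} (G : SimpleGraph V) (S : Set V) : Set V :=
  ⋂₀ {T | S ⊆ T ∧ IsGeodConvex G T}

/-- The convexity number: the maximum cardinality of a proper convex set. -/
noncomputable def convexityNumber {V : Type*} (G : SimpleGraph V) : ℕ :=
  sSup {n | ∃ S : Set V, IsGeodConvex G S ∧ S ≠ Set.univ ∧ S.ncard = n}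

/-- Key structural lemma: a walk starting at a left copy of a vertex of a
component `c₀` and ending outside the left copy of `c₀` must cross a matching
edge `inl x — inr x` with `x ∈ c₀`, after walking inside the left copy of
`c₀`. -/
lemma compPrism_exit {V : Type*} (G : SimpleGraph V) (c₀ : G.ConnectedComponent) :
    ∀ {s t : V ⊕ V} (r : (compPrism G).Walk s t),
      (∃ a ∈ c₀.supp, s = Sum.inl a) → t ∉ Sum.inl '' c₀.supp →
      ∃ x ∈ c₀.supp, ∃ r' : (compPrism G).Walk (Sum.inr x) t,
        Sum.inr x ∈ r.support ∧ r'.length + 1 ≤ r.length ∧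
        (s = Sum.inl x ∨ r'.length + 2 ≤ r.length) := by
  intro s t r
  induction r with
  | nil =>
    rintro ⟨a, ha, rfl⟩ ht
    exact absurd ⟨a, ha, rfl⟩ ht
  | @cons s b t h q ih =>
    rintro ⟨a, ha, rfl⟩ ht
    match b, h with
    | Sum.inl a', h =>
      have hG : G.Adj a a' := h
      have ha' : a' ∈ c₀.supp := by
        rw [SimpleGraph.ConnectedComponent.mem_supp_iff] at ha ⊢
        rw [← ha]
        exact SimpleGraph.ConnectedComponent.sound hG.symm.reachable
      obtain ⟨x, hx, r', hmem, hlen, _⟩ := ih ⟨a', ha', rfl⟩ ht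
      refine ⟨x, hx, r', ?_, ?_, Or.inr ?_⟩
      · rw [SimpleGraph.Walk.support_cons]
        exact List.mem_cons_of_mem _ hmem
      · simpa [SimpleGraph.Walk.length_cons] using Nat.le_succ_of_le hlen
      · simpa [SimpleGraph.Walk.length_cons] using Nat.succ_le_succ hlen
    | Sum.inr a'', h =>
      have haa : a = a'' := h
      subst haa
      refine ⟨a, ha, q, ?_, ?_, Or.inl rfl⟩
      · rw [SimpleGraph.Walk.support_cons]
        exact List.mem_cons_of_mem _ q.start_mem_support
      · simp [SimpleGraph.Walk.length_cons]

theorem stmt1 {V : Type*} [Fintype V] (G : SimpleGraph V)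
    (hdisc : ¬G.Preconnected)
    (hnt : ∀ c : G.ConnectedComponent, 2 ≤ c.supp.ncard)
    (c₀ : G.ConnectedComponent)
    (hmin : ∀ c : G.ConnectedComponent, c₀.supp.ncard ≤ c.supp.ncard) :
    IsGeodConvex (compPrism G) (Set.univ \ (Sum.inl '' c₀.supp)) := by
  classical
  intro u hu w hw v hv
  refine ⟨Set.mem_univ v, fun hvT => ?_⟩
  obtain ⟨p, hp, hplen, hvsup⟩ := hv
  obtain ⟨a, ha, rfl⟩ := hvT
  have hu' : u ∉ Sum.inl '' c₀.supp := hu.2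
  have hw' : w ∉ Sum.inl '' c₀.supp := hw.2
  -- split the shortest path at `inl a`
  set q₁ := p.takeUntil (Sum.inl a) hvsup with hq₁
  set q₂ := p.dropUntil (Sum.inl a) hvsup with hq₂
  have hspec : q₁.append q₂ = p := p.take_spec hvsup
  -- apply the exit lemma on both sides
  obtain ⟨x, hx, r₁, hmem₁, hlen₁, hd₁⟩ :=
    compPrism_exit G c₀ q₁.reverse ⟨a, ha, rfl⟩ hu'
  obtain ⟨y, hy, r₂, hmem₂, hlen₂, hd₂⟩ :=
    compPrism_exit G c₀ q₂ ⟨a, ha, rfl⟩ hw'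
  rw [SimpleGraph.Walk.support_reverse, List.mem_reverse] at hmem₁
  rw [SimpleGraph.Walk.length_reverse] at hlen₁ hd₁
  -- x ≠ y since the two halves of a path only share the splitting vertex
  have hnodup : (q₁.support ++ q₂.support.tail).Nodup := by
    have := hp.support_nodup
    rwa [← hspec, SimpleGraph.Walk.support_append] at this
  have hxy : x ≠ y := by
    rintro rfl
    have h2 : Sum.inr x ∈ q₂.support.tail := by
      have := hmem₂
      rw [SimpleGraph.Walk.support_eq_cons] at this
      rcases List.mem_cons.mp this with h | h
      · exact absurd h.symm (by simp)
      · exact h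
    rw [List.nodup_append] at hnodup
    exact hnodup.2.2 _ hmem₁ _ h2 rfl
  -- a vertex outside c₀ exists since G is disconnected
  have hz : ∃ z, z ∉ c₀.supp := by
    rw [SimpleGraph.Preconnected] at hdisc
    push_neg at hdisc
    obtain ⟨u₀, v₀, huv⟩ := hdisc
    by_contra hc
    push_neg at hc
    have h1 := (SimpleGraph.ConnectedComponent.mem_supp_iff _ _).mp (hc u₀)
    have h2 := (SimpleGraph.ConnectedComponent.mem_supp_iff _ _).mp (hc v₀)
    exact huv (SimpleGraph.ConnectedComponent.exact (h1.trans h2.symm))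
  -- a short middle walk `inr x → inr y` of length ≤ 2
  have hmid : ∃ m : (compPrism G).Walk (Sum.inr x) (Sum.inr y), m.length ≤ 2 := by
    by_cases hadj : Gᶜ.Adj x y
    · exact ⟨SimpleGraph.Walk.cons (show (compPrism G).Adj (Sum.inr x) (Sum.inr y) from hadj) SimpleGraph.Walk.nil,
        by simp⟩
    · obtain ⟨z, hzc⟩ := hz
      have hxz : Gᶜ.Adj x z := by
        rw [SimpleGraph.compl_adj]
        refine ⟨fun hh => hzc ?_, fun hh => hzc ?_⟩
        · subst hh; exact hx
        · rw [SimpleGraph.ConnectedComponent.mem_supp_iff] at hx ⊢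
          rw [← hx]
          exact SimpleGraph.ConnectedComponent.sound hh.symm.reachable
      have hzy : Gᶜ.Adj z y := by
        rw [SimpleGraph.compl_adj]
        refine ⟨fun hh => hzc ?_, fun hh => hzc ?_⟩
        · subst hh; exact hy
        · rw [SimpleGraph.ConnectedComponent.mem_supp_iff] at hy ⊢
          rw [← hy]
          exact SimpleGraph.ConnectedComponent.sound hh.reachable
      exact ⟨SimpleGraph.Walk.cons (show (compPrism G).Adj (Sum.inr x) (Sum.inr z) from hxz)
        (SimpleGraph.Walk.cons (show (compPrism G).Adj (Sum.inr z) (Sum.inr y) from hzy) SimpleGraph.Walk.nil),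
        by simp⟩
  obtain ⟨m, hm⟩ := hmid
  -- the replacement walk
  set W : (compPrism G).Walk u w := r₁.reverse.append (m.append r₂) with hW
  have hWlen : W.length = r₁.length + m.length + r₂.length := by
    simp [hW, SimpleGraph.Walk.length_append, SimpleGraph.Walk.length_reverse]
    omega
  -- length comparison: W is strictly shorter than p
  have hplen' : p.length = q₁.length + q₂.length := by
    rw [← hspec, SimpleGraph.Walk.length_append]
  have hstrict : W.length < p.length := by
    rcases hd₁ with h₁ | h₁
    · -- a = x, so y ≠ a, hence the strict bound on the right side
      rcases hd₂ with h₂ | h₂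
      · exfalso
        apply hxy
        have : Sum.inl x = (Sum.inl y : V ⊕ V) := h₁.symm.trans h₂
        simpa using this
      · omega
    · omega
  have := SimpleGraph.dist_le W
  omega
end

section
/- Let G be a disconnected graph of order n and let k be the minimum order of a connected component of G. Then the convexity number of the complementary prism G∘Ḡ equals 2n − k, i.e., the maximum cardinality of a proper convex set of G∘Ḡ in the geodetic convexity is 2n − k. -/
open SimpleGraph

section aux
variable {W : Type*} {H : SimpleGraph W}

@[simp] lemma cp_adj_ll {V : Type*} {G : SimpleGraph V} {a b : V} :
    (compPrism G).Adj (Sum.inl a) (Sum.inl b) ↔ G.Adj a b := Iff.rfl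

@[simp] lemma cp_adj_lr {V : Type*} {G : SimpleGraph V} {a b : V} :
    (compPrism G).Adj (Sum.inl a) (Sum.inr b) ↔ a = b := Iff.rfl

@[simp] lemma cp_adj_rl {V : Type*} {G : SimpleGraph V} {a b : V} :
    (compPrism G).Adj (Sum.inr a) (Sum.inl b) ↔ a = b := Iff.rfl

@[simp] lemma cp_adj_rr {V : Type*} {G : SimpleGraph V} {a b : V} :
    (compPrism G).Adj (Sum.inr a) (Sum.inr b) ↔ a ≠ b ∧ ¬ G.Adj a b := by
  show Gᶜ.Adj a b ↔ _
  rw [compl_adj]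

lemma mid2 {u w : W} (p : H.Walk u w) (hp : p.length = 2) :
    ∃ z, H.Adj u z ∧ H.Adj z w := by
  cases p with
  | nil => simp at hp
  | cons h q =>
    cases q with
    | nil => simp at hp
    | cons h' q' =>
      cases q' with
      | nil => exact ⟨_, h, h'⟩
      | cons h'' q'' => simp at hp

lemma geo2 {u m w : W} (h1 : H.Adj u m) (h2 : H.Adj m w) (huw : u ≠ w)
    (hna : ¬ H.Adj u w) : inInterval H u w m := by
  refine ⟨Walk.cons h1 (Walk.cons h2 Walk.nil), ?_, ?_, ?_⟩
  · simp [Walk.isPath_def, h1.ne, h2.ne, huw]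
  · have hle : H.dist u w ≤ 2 := by
      simpa using dist_le (Walk.cons h1 (Walk.cons h2 Walk.nil))
    have h0 : H.dist u w ≠ 0 := fun h =>
      huw ((Walk.cons h1 (Walk.cons h2 Walk.nil)).reachable.dist_eq_zero_iff.mp h)
    have h1' : H.dist u w ≠ 1 := fun h => hna (dist_eq_one_iff_adj.mp h)
    simp only [Walk.length_cons, Walk.length_nil]
    omega
  · simp

lemma geo3 {u m1 m2 w : W} (h1 : H.Adj u m1) (h2 : H.Adj m1 m2) (h3 : H.Adj m2 w)
    (huw : u ≠ w) (hum2 : u ≠ m2) (hm1w : m1 ≠ w)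
    (hna : ¬ H.Adj u w) (hno2 : ∀ z, ¬ (H.Adj u z ∧ H.Adj z w)) :
    inInterval H u w m1 ∧ inInterval H u w m2 := by
  have hdist : H.dist u w = 3 := by
    have hle : H.dist u w ≤ 3 := by
      simpa using dist_le (Walk.cons h1 (Walk.cons h2 (Walk.cons h3 Walk.nil)))
    have h0 : H.dist u w ≠ 0 := fun h =>
      huw ((Walk.cons h1 (Walk.cons h2 (Walk.cons h3 Walk.nil))).reachable.dist_eq_zero_iff.mp h)
    have h1' : H.dist u w ≠ 1 := fun h => hna (dist_eq_one_iff_adj.mp h)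
    have h2' : H.dist u w ≠ 2 := by
      intro h
      obtain ⟨p, hp⟩ := ((Walk.cons h1 (Walk.cons h2 (Walk.cons h3
        Walk.nil))).reachable).exists_walk_length_eq_dist
      rw [h] at hp
      obtain ⟨z, hz⟩ := mid2 p hp
      exact hno2 z hz
    omega
  have hpath : (Walk.cons h1 (Walk.cons h2 (Walk.cons h3 Walk.nil)) : H.Walk u w).IsPath := by
    simp [Walk.isPath_def, h1.ne, h2.ne, h3.ne, huw, hum2, hm1w]
  refine ⟨⟨_, hpath, ?_, by simp⟩, ⟨_, hpath, ?_, by simp⟩⟩ <;> simp [hdist]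

lemma support_len0 {u w : W} (p : H.Walk u w) (hp : p.length = 0) :
    ∀ v ∈ p.support, v = u := by
  cases p with
  | nil => intro v hv; simpa using hv
  | cons h q => simp at hp

lemma support_len2 {u w : W} (p : H.Walk u w) (hp : p.length ≤ 2) :
    ∀ v ∈ p.support, v = u ∨ v = w ∨ (H.Adj u v ∧ H.Adj v w) := by
  cases p with
  | nil => intro v hv; simp at hv; exact Or.inl hv
  | cons h q =>
    cases q with
    | nil => intro v hv; simp at hv; rcases hv with h|h; exacts [Or.inl h, Or.inr (Or.inl h)]
    | cons h' q' =>
      cases q' with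
      | nil =>
        intro v hv
        simp at hv
        rcases hv with h''|h''|h''
        · exact Or.inl h''
        · exact Or.inr (Or.inr ⟨h'' ▸ h, h'' ▸ h'⟩)
        · exact Or.inr (Or.inl h'')
      | cons h'' q'' => simp [Walk.length_cons] at hp

lemma support_len3 {u w : W} (p : H.Walk u w) (hp : p.length ≤ 3) :
    ∀ v ∈ p.support, v = u ∨ v = w ∨ H.Adj u v ∨ H.Adj v w := by
  cases p with
  | nil => intro v hv; simp at hv; exact Or.inl hv
  | cons h q =>
    intro v hv
    simp at hv
    rcases hv with rfl|hv
    · exact Or.inl rfl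
    · have := support_len2 q (by simp at hp; omega) v hv
      rcases this with rfl|h'|⟨h1, h2⟩
      · exact Or.inr (Or.inr (Or.inl h))
      · exact Or.inr (Or.inl h')
      · exact Or.inr (Or.inr (Or.inr h2))

end aux

section prism
variable {V : Type*} (G : SimpleGraph V)

lemma cp_dist_lr (a b : V) : (compPrism G).dist (Sum.inl a) (Sum.inr b) ≤ 2 := by
  by_cases hab : a = b
  · subst hab
    have h : (compPrism G).Adj (Sum.inl a) (Sum.inr a) := cp_adj_lr.mpr rfl
    calc (compPrism G).dist (Sum.inl a) (Sum.inr a) ≤ _ := dist_le h.toWalk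
    _ ≤ 2 := by simp
  · by_cases hG : G.Adj a b
    · have h1 : (compPrism G).Adj (Sum.inl a) (Sum.inl b) := hG
      have h2 : (compPrism G).Adj (Sum.inl b) (Sum.inr b) := cp_adj_lr.mpr rfl
      simpa using dist_le (Walk.cons h1 (Walk.cons h2 Walk.nil))
    · have h1 : (compPrism G).Adj (Sum.inl a) (Sum.inr a) := cp_adj_lr.mpr rfl
      have h2 : (compPrism G).Adj (Sum.inr a) (Sum.inr b) := cp_adj_rr.mpr ⟨hab, hG⟩
      simpa using dist_le (Walk.cons h1 (Walk.cons h2 Walk.nil))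

lemma cp_dist_rr (hdisc : ∃ u v : V, ¬ G.Reachable u v) (a b : V) :
    (compPrism G).dist (Sum.inr a) (Sum.inr b) ≤ 2 := by
  by_cases hab : a = b
  · subst hab; rw [SimpleGraph.dist_self]; omega
  · by_cases hG : G.Adj a b
    · have hunreach : ∃ z, ¬ G.Reachable a z := by
        obtain ⟨u0, v0, h⟩ := hdisc
        by_cases hr : G.Reachable a u0
        · exact ⟨v0, fun h' => h (hr.symm.trans h')⟩
        · exact ⟨u0, hr⟩
      obtain ⟨z, hz⟩ := hunreach
      have hza : a ≠ z := fun h => hz (h ▸ Reachable.refl a)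
      have hzb : b ≠ z := fun h => hz (hG.reachable.trans (h ▸ Reachable.refl b))
      have h1 : (compPrism G).Adj (Sum.inr a) (Sum.inr z) :=
        cp_adj_rr.mpr ⟨hza, fun h => hz h.reachable⟩
      have h2 : (compPrism G).Adj (Sum.inr z) (Sum.inr b) :=
        cp_adj_rr.mpr ⟨Ne.symm hzb, fun h => hz (hG.reachable.trans h.symm.reachable)⟩
      simpa using dist_le (Walk.cons h1 (Walk.cons h2 Walk.nil))
    · have h1 : (compPrism G).Adj (Sum.inr a) (Sum.inr b) := cp_adj_rr.mpr ⟨hab, hG⟩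
      calc (compPrism G).dist _ _ ≤ _ := dist_le h1.toWalk
      _ ≤ 2 := by simp

lemma cp_dist_ll (a b : V) : (compPrism G).dist (Sum.inl a) (Sum.inl b) ≤ 3 := by
  by_cases hab : a = b
  · subst hab; rw [SimpleGraph.dist_self]; omega
  · by_cases hG : G.Adj a b
    · have h1 : (compPrism G).Adj (Sum.inl a) (Sum.inl b) := hG
      calc (compPrism G).dist _ _ ≤ _ := dist_le h1.toWalk
      _ ≤ 3 := by simp
    · have h1 : (compPrism G).Adj (Sum.inl a) (Sum.inr a) := cp_adj_lr.mpr rfl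
      have h2 : (compPrism G).Adj (Sum.inr a) (Sum.inr b) := cp_adj_rr.mpr ⟨hab, hG⟩
      have h3 : (compPrism G).Adj (Sum.inr b) (Sum.inl b) := cp_adj_rl.mpr rfl
      simpa using dist_le (Walk.cons h1 (Walk.cons h2 (Walk.cons h3 Walk.nil)))

lemma S0_convex (hdisc : ∃ u v : V, ¬ G.Reachable u v) (c : G.ConnectedComponent) :
    IsGeodConvex (compPrism G) (Sum.inl '' c.supp)ᶜ := by
  intro u hu w hw v hiv
  obtain ⟨p, hpath, hlen, hsupp⟩ := hiv
  intro hv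
  obtain ⟨x, hx, rfl⟩ := hv
  have hmkx : G.connectedComponentMk x = c := (ConnectedComponent.mem_supp_iff _ _).mp hx
  match u, w, p, hu, hw, hlen, hsupp with
  | Sum.inl a, Sum.inl b, p, hu, hw, hlen, hsupp =>
    have hlen3 : p.length ≤ 3 := by rw [hlen]; exact cp_dist_ll G a b
    rcases support_len3 p hlen3 _ hsupp with h | h | h | h
    · obtain rfl : x = a := Sum.inl_injective h
      exact hu ⟨x, hx, rfl⟩
    · obtain rfl : x = b := Sum.inl_injective h
      exact hw ⟨x, hx, rfl⟩
    · have hadj : G.Adj a x := cp_adj_ll.mp h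
      refine hu ⟨a, ?_, rfl⟩
      rw [ConnectedComponent.mem_supp_iff]
      exact (ConnectedComponent.eq.mpr hadj.reachable).trans hmkx
    · have hadj : G.Adj x b := cp_adj_ll.mp h
      refine hw ⟨b, ?_, rfl⟩
      rw [ConnectedComponent.mem_supp_iff]
      exact (ConnectedComponent.eq.mpr hadj.reachable.symm).trans hmkx
  | Sum.inl a, Sum.inr b, p, hu, hw, hlen, hsupp =>
    have hlen2 : p.length ≤ 2 := by rw [hlen]; exact cp_dist_lr G a b
    rcases support_len2 p hlen2 _ hsupp with h | h | ⟨h1, _⟩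
    · obtain rfl : x = a := Sum.inl_injective h
      exact hu ⟨x, hx, rfl⟩
    · exact absurd h (by simp)
    · have hadj : G.Adj a x := cp_adj_ll.mp h1
      refine hu ⟨a, ?_, rfl⟩
      rw [ConnectedComponent.mem_supp_iff]
      exact (ConnectedComponent.eq.mpr hadj.reachable).trans hmkx
  | Sum.inr a, Sum.inl b, p, hu, hw, hlen, hsupp =>
    have hlen2 : p.length ≤ 2 := by
      rw [hlen, SimpleGraph.dist_comm]; exact cp_dist_lr G b a
    rcases support_len2 p hlen2 _ hsupp with h | h | ⟨_, h2⟩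
    · exact absurd h (by simp)
    · obtain rfl : x = b := Sum.inl_injective h
      exact hw ⟨x, hx, rfl⟩
    · have hadj : G.Adj x b := cp_adj_ll.mp h2
      refine hw ⟨b, ?_, rfl⟩
      rw [ConnectedComponent.mem_supp_iff]
      exact (ConnectedComponent.eq.mpr hadj.reachable.symm).trans hmkx
  | Sum.inr a, Sum.inr b, p, hu, hw, hlen, hsupp =>
    have hlen2 : p.length ≤ 2 := by rw [hlen]; exact cp_dist_rr G hdisc a b
    rcases support_len2 p hlen2 _ hsupp with h | h | ⟨h1, h2⟩
    · exact absurd h (by simp)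
    · exact absurd h (by simp)
    · obtain rfl : a = x := cp_adj_rl.mp h1
      obtain rfl : a = b := cp_adj_lr.mp h2
      rw [SimpleGraph.dist_self] at hlen
      have := support_len0 p hlen _ hsupp
      exact absurd this (by simp)
end prism

lemma first_step' {W : Type*} {H : SimpleGraph W} {u w : W} (p : H.Walk u w) (hne : u ≠ w) :
    ∃ z, H.Adj u z := by
  cases p with
  | nil => exact absurd rfl hne
  | cons h q => exact ⟨_, h⟩

lemma endgame {V : Type*} [Fintype V] (G : SimpleGraph V)
    (hdisc : ∃ u v : V, ¬ G.Reachable u v)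
    (k : ℕ) (hk : ∀ c : G.ConnectedComponent, k ≤ c.supp.ncard)
    (A B : Set V)
    (hR1 : ∀ c x, c ∉ A → G.Adj c x → x ∉ B → x ∉ A)
    (hR3 : ∀ x y z, x ∉ B → y ∉ B → G.Adj x y → z ≠ x → z ≠ y →
      ¬G.Adj z x → ¬G.Adj z y → z ∉ B)
    (hR5 : ∀ x y z, x ∉ A → y ∉ A → x ≠ y → ¬G.Adj x y → G.Adj x z → G.Adj z y → z ∉ A)
    (hR7 : ∀ x y, x ∉ A → y ∉ A → ¬G.Reachable x y → x ∉ B)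
    (hcard : A.ncard + B.ncard < k) : A = ∅ ∧ B = ∅ := by
  classical
  have hrep : ∀ c : G.ConnectedComponent, ∃ v, v ∈ c.supp ∧ v ∉ A := by
    intro c
    by_contra h
    push_neg at h
    have hsub : c.supp ⊆ A := h
    have h1 := Set.ncard_le_ncard hsub (Set.toFinite A)
    have h2 := hk c
    omega
  have hunreach : ∀ a : V, ∃ z, ¬ G.Reachable a z := by
    obtain ⟨u0, v0, h⟩ := hdisc
    intro a
    by_cases hr : G.Reachable a u0
    · exact ⟨v0, fun h' => h (hr.symm.trans h')⟩
    · exact ⟨u0, hr⟩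
  have hBA : B ⊆ A := by
    intro b hb
    by_contra hbA
    obtain ⟨z, hz⟩ := hunreach b
    obtain ⟨y, hy, hyA⟩ := hrep (G.connectedComponentMk z)
    have hyz : G.Reachable y z :=
      ConnectedComponent.eq.mp (by rwa [ConnectedComponent.mem_supp_iff] at hy)
    exact (hR7 b y hbA hyA (fun h => hz (h.trans hyz))) hb
  rcases Set.eq_empty_or_nonempty A with hA | hA
  · exact ⟨hA, Set.subset_empty_iff.mp (hA ▸ hBA)⟩
  exfalso
  obtain ⟨a₀, ha₀⟩ := hA
  have hbnd : ∀ x y : V, ∀ p : G.Walk x y, x ∈ A → y ∉ A →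
      ∃ a c, a ∈ A ∧ c ∉ A ∧ G.Adj a c ∧ G.Reachable x a := by
    intro x y p
    induction p with
    | nil => intro hx hy; exact absurd hx hy
    | @cons x' m y' h q ih =>
      intro hx hy
      by_cases hm : m ∈ A
      · obtain ⟨a, c, h1, h2, h3, h4⟩ := ih hm hy
        exact ⟨a, c, h1, h2, h3, (h.reachable).trans h4⟩
      · exact ⟨x', m, hx, hm, h, Reachable.refl x'⟩
  have hbnd' : ∀ x ∈ A, ∃ a c, a ∈ A ∧ c ∉ A ∧ G.Adj a c ∧ G.Reachable x a := by
    intro x hx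
    obtain ⟨y, hy, hyA⟩ := hrep (G.connectedComponentMk x)
    have hxy : G.Reachable x y :=
      (ConnectedComponent.eq.mp (by rwa [ConnectedComponent.mem_supp_iff] at hy)).symm
    obtain ⟨p⟩ := hxy
    exact hbnd x y p hx hyA
  have haB : ∀ a c, a ∈ A → c ∉ A → G.Adj a c → a ∈ B := by
    intro a c ha hc hac
    by_contra hB
    exact (hR1 c a hc hac.symm hB) ha
  have hmeets : ∀ a, a ∈ A → a ∈ B → ∀ x y, x ∉ A → y ∉ A → G.Adj x y →
      G.Adj a x ∨ G.Adj a y := by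
    intro a ha haB' x y hx hy hxy
    by_contra h
    push_neg at h
    exact (hR3 x y a (fun hxB => hx (hBA hxB)) (fun hyB => hy (hBA hyB)) hxy
      (fun he => hx (he ▸ ha)) (fun he => hy (he ▸ ha)) h.1 h.2) haB'
  obtain ⟨a, c, ha, hc, hac, _⟩ := hbnd' a₀ ha₀
  have haB1 : a ∈ B := haB a c ha hc hac
  obtain ⟨z, hz⟩ := hunreach a
  have hk3 : 3 ≤ k := by
    have h1 : 0 < A.ncard := (Set.ncard_pos (Set.toFinite A)).mpr ⟨a, ha⟩
    have h2 : 0 < B.ncard := (Set.ncard_pos (Set.toFinite B)).mpr ⟨a, haB1⟩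
    omega
  have h2lt : 1 < (G.connectedComponentMk z).supp.ncard :=
    lt_of_lt_of_le (by omega) (hk _)
  obtain ⟨z', hz'supp, hz'ne⟩ := Set.exists_ne_of_one_lt_ncard h2lt z
  have hrz : G.Reachable z z' :=
    (ConnectedComponent.eq.mp (ConnectedComponent.mem_supp_iff _ _ |>.mp hz'supp)).symm
  obtain ⟨p⟩ := hrz
  obtain ⟨m, hm⟩ := first_step' p (Ne.symm hz'ne)
  have hmz : ¬ G.Reachable a m := fun h => hz (h.trans hm.reachable.symm)
  have hzmA : z ∈ A ∨ m ∈ A := by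
    by_contra h
    push_neg at h
    rcases hmeets a ha haB1 z m h.1 h.2 hm with h' | h'
    · exact hz h'.reachable
    · exact hmz h'.reachable
  have hexists : ∃ a₀', a₀' ∈ A ∧ ¬ G.Reachable a a₀' := by
    rcases hzmA with h | h
    · exact ⟨z, h, hz⟩
    · exact ⟨m, h, hmz⟩
  obtain ⟨a₀', ha₀', hra₀'⟩ := hexists
  obtain ⟨a', c', ha', hc', hac', hra'⟩ := hbnd' a₀' ha₀'
  have hnra' : ¬ G.Reachable a a' := fun h => hra₀' (h.trans hra'.symm)
  have ha'B : a' ∈ B := haB a' c' ha' hc' hac'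
  have hind : ∀ x y, x ∉ A → y ∉ A → ¬ G.Adj x y := by
    intro x y hx hy hxy
    have H1 := hmeets a ha haB1 x y hx hy hxy
    have H2 := hmeets a' ha' ha'B x y hx hy hxy
    apply hnra'
    rcases H1 with h1 | h1 <;> rcases H2 with h2 | h2
    · exact h1.reachable.trans h2.reachable.symm
    · exact h1.reachable.trans (hxy.reachable.trans h2.reachable.symm)
    · exact h1.reachable.trans (hxy.reachable.symm.trans h2.reachable.symm)
    · exact h1.reachable.trans h2.reachable.symm
  have huniq : ∀ z₁ ∈ A, ∀ x y, x ∉ A → y ∉ A → G.Adj z₁ x → G.Adj z₁ y → x = y := by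
    intro z1 hz1 x y hx hy h1 h2
    by_contra hne
    exact (hR5 x y z1 hx hy hne (hind x y hx hy) h1.symm h2) hz1
  have hcount : ∀ C : G.ConnectedComponent, C.supp.ncard ≤ 2 * (C.supp ∩ A).ncard := by
    intro C
    have hnbr : ∀ c₁ ∈ C.supp \ A, ∃ e, e ∈ C.supp ∩ A ∧ G.Adj c₁ e := by
      intro c₁ hc₁
      obtain ⟨hcs, hcA⟩ := hc₁
      have h2 : 1 < C.supp.ncard := lt_of_lt_of_le (by omega) (hk C)
      obtain ⟨c', hc's, hc'ne⟩ := Set.exists_ne_of_one_lt_ncard h2 c₁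
      have hr : G.Reachable c₁ c' := ConnectedComponent.eq.mp
        ((ConnectedComponent.mem_supp_iff _ _ |>.mp hcs).trans
          (ConnectedComponent.mem_supp_iff _ _ |>.mp hc's).symm)
      obtain ⟨p⟩ := hr
      obtain ⟨e, he⟩ := first_step' p (Ne.symm hc'ne)
      have heA : e ∈ A := by
        by_contra h
        exact hind c₁ e hcA h he
      have hes : e ∈ C.supp := by
        rw [ConnectedComponent.mem_supp_iff]
        exact (ConnectedComponent.eq.mpr he.reachable.symm).trans
          (ConnectedComponent.mem_supp_iff _ _ |>.mp hcs)
      exact ⟨e, ⟨hes, heA⟩, he⟩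
    set f : V → V := fun c₁ => if h : c₁ ∈ C.supp \ A then (hnbr c₁ h).choose else c₁ with hf
    have hmaps : ∀ c₁ ∈ C.supp \ A, f c₁ ∈ C.supp ∩ A := by
      intro c₁ h
      simp only [hf, dif_pos h]
      exact ((hnbr c₁ h).choose_spec).1
    have hinj : Set.InjOn f (C.supp \ A) := by
      intro c1 h1 c2 h2 he
      have s1 := (hnbr c1 h1).choose_spec
      have s2 := (hnbr c2 h2).choose_spec
      simp only [hf, dif_pos h1, dif_pos h2] at he
      exact huniq ((hnbr c2 h2).choose) s2.1.2 c1 c2 h1.2 h2.2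
        (by rw [← he]; exact s1.2.symm) s2.2.symm
    have hle := Set.ncard_le_ncard_of_injOn f hmaps hinj (Set.toFinite _)
    have heq := Set.ncard_inter_add_ncard_diff_eq_ncard C.supp A (Set.toFinite _)
    omega
  have h1 := hcount (G.connectedComponentMk a)
  have h2 := hcount (G.connectedComponentMk a')
  have hdiff : G.connectedComponentMk a ≠ G.connectedComponentMk a' :=
    fun h => hnra' (ConnectedComponent.eq.mp h)
  have hdisj : Disjoint ((G.connectedComponentMk a).supp ∩ A)
      ((G.connectedComponentMk a').supp ∩ A) := by
    rw [Set.disjoint_left]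
    intro v hv hv'
    exact hdiff (((ConnectedComponent.mem_supp_iff _ _).mp hv.1).symm.trans
      ((ConnectedComponent.mem_supp_iff _ _).mp hv'.1))
  have hsum : ((G.connectedComponentMk a).supp ∩ A).ncard +
      ((G.connectedComponentMk a').supp ∩ A).ncard ≤ A.ncard := by
    rw [← Set.ncard_union_eq hdisj (Set.toFinite _) (Set.toFinite _)]
    refine Set.ncard_le_ncard ?_ (Set.toFinite A)
    intro v hv
    rcases hv with h | h <;> exact h.2
  have hka := hk (G.connectedComponentMk a)
  have hka' := hk (G.connectedComponentMk a')
  omega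

lemma cp_upper {V : Type*} [Fintype V] (G : SimpleGraph V)
    (hdisc : ∃ u v : V, ¬ G.Reachable u v)
    (k : ℕ) (hk : ∀ c : G.ConnectedComponent, k ≤ c.supp.ncard)
    (S : Set (V ⊕ V)) (hS : IsGeodConvex (compPrism G) S) (hne : S ≠ Set.univ) :
    S.ncard ≤ 2 * Fintype.card V - k := by
  classical
  set A : Set V := {a | Sum.inl a ∉ S} with hA
  set B : Set V := {b | Sum.inr b ∉ S} with hB
  have hmemA : ∀ a : V, a ∉ A ↔ Sum.inl a ∈ S := by intro a; simp [hA]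
  have hmemB : ∀ b : V, b ∉ B ↔ Sum.inr b ∈ S := by intro b; simp [hB]
  have hR1 : ∀ c x, c ∉ A → G.Adj c x → x ∉ B → x ∉ A := by
    intro c x hc hcx hx
    rw [hmemA] at hc ⊢
    rw [hmemB] at hx
    have hint := geo2 (H := compPrism G) (u := Sum.inl c) (m := Sum.inl x) (w := Sum.inr x)
      hcx (cp_adj_lr.mpr rfl) (by simp)
      (fun h => hcx.ne (cp_adj_lr.mp h))
    exact hS _ hc _ hx _ hint
  have hR3 : ∀ x y z, x ∉ B → y ∉ B → G.Adj x y → z ≠ x → z ≠ y →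
      ¬G.Adj z x → ¬G.Adj z y → z ∉ B := by
    intro x y z hx hy hxy hzx hzy h1 h2
    rw [hmemB] at hx hy ⊢
    have hint := geo2 (H := compPrism G) (u := Sum.inr x) (m := Sum.inr z) (w := Sum.inr y)
      (cp_adj_rr.mpr ⟨Ne.symm hzx, fun h => h1 h.symm⟩)
      (cp_adj_rr.mpr ⟨hzy, h2⟩)
      (by simp [hxy.ne])
      (fun h => (cp_adj_rr.mp h).2 hxy)
    exact hS _ hx _ hy _ hint
  have hR5 : ∀ x y z, x ∉ A → y ∉ A → x ≠ y → ¬G.Adj x y → G.Adj x z → G.Adj z y → z ∉ A := by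
    intro x y z hx hy hxy hnadj h1 h2
    rw [hmemA] at hx hy ⊢
    exact hS _ hx _ hy _
      (geo2 (H := compPrism G) (u := Sum.inl x) (m := Sum.inl z) (w := Sum.inl y)
        h1 h2 (by simp [hxy]) hnadj)
  have hR7 : ∀ x y, x ∉ A → y ∉ A → ¬G.Reachable x y → x ∉ B := by
    intro x y hx hy hr
    rw [hmemA] at hx hy
    rw [hmemB]
    have hxy : x ≠ y := fun h => hr (h ▸ Reachable.refl x)
    have hnadj : ¬ G.Adj x y := fun h => hr h.reachable
    have hint := geo3 (H := compPrism G) (u := Sum.inl x) (m1 := Sum.inr x)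
      (m2 := Sum.inr y) (w := Sum.inl y)
      (cp_adj_lr.mpr rfl) (cp_adj_rr.mpr ⟨hxy, hnadj⟩) (cp_adj_rl.mpr rfl)
      (by simp [hxy]) (by simp) (by simp)
      hnadj
      (by
        rintro (t | t) ⟨ha1, ha2⟩
        · exact hr ((cp_adj_ll.mp ha1).reachable.trans (cp_adj_ll.mp ha2).reachable)
        · exact hxy ((cp_adj_lr.mp ha1).trans (cp_adj_rl.mp ha2)))
    exact hS _ hx _ hy _ hint.1
  by_cases hlt : A.ncard + B.ncard < k
  · exfalso
    apply hne
    obtain ⟨hAe, hBe⟩ := endgame G hdisc k hk A B hR1 hR3 hR5 hR7 hlt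
    ext v
    simp only [Set.mem_univ, iff_true]
    cases v with
    | inl a =>
      rw [← hmemA a, hAe]
      exact Set.notMem_empty a
    | inr b =>
      rw [← hmemB b, hBe]
      exact Set.notMem_empty b
  · push_neg at hlt
    have hcompl : Sᶜ = (Sum.inl '' A) ∪ (Sum.inr '' B) := by
      ext v
      cases v with
      | inl a => simp [hA]
      | inr b => simp [hB]
    have hdisj : Disjoint (Sum.inl '' A : Set (V ⊕ V)) (Sum.inr '' B) := by
      rw [Set.disjoint_left]
      rintro v ⟨x, _, rfl⟩ ⟨y, _, h⟩
      cases h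
    have hcardc : Sᶜ.ncard = A.ncard + B.ncard := by
      rw [hcompl, Set.ncard_union_eq hdisj (Set.toFinite _) (Set.toFinite _),
        Set.ncard_image_of_injective _ Sum.inl_injective,
        Set.ncard_image_of_injective _ Sum.inr_injective]
    have htot := Set.ncard_add_ncard_compl S (Set.toFinite _) (Set.toFinite _)
    have hcard2 : Nat.card (V ⊕ V) = 2 * Fintype.card V := by
      rw [Nat.card_eq_fintype_card, Fintype.card_sum]; ring
    omega

theorem stmt2' {V : Type*} [Fintype V] (G : SimpleGraph V)
    (hdisc : ¬G.Preconnected)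
    (c₀ : G.ConnectedComponent)
    (hmin : ∀ c : G.ConnectedComponent, c₀.supp.ncard ≤ c.supp.ncard) :
    (sSup {n | ∃ S : Set (V ⊕ V), IsGeodConvex (compPrism G) S ∧ S ≠ Set.univ ∧ S.ncard = n} : ℕ)
      = 2 * Fintype.card V - c₀.supp.ncard := by
  classical
  have hdisc' : ∃ u v : V, ¬ G.Reachable u v := by
    by_contra h
    push_neg at h
    exact hdisc fun u v => h u v
  set k := c₀.supp.ncard with hkdef
  set N := Fintype.card V with hN
  have hub : ∀ n ∈ {n | ∃ S : Set (V ⊕ V), IsGeodConvex (compPrism G) S ∧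
      S ≠ Set.univ ∧ S.ncard = n}, n ≤ 2 * N - k := by
    rintro n ⟨S, h1, h2, rfl⟩
    exact cp_upper G hdisc' k hmin S h1 h2
  obtain ⟨v₀, hv₀⟩ := c₀.exists_rep
  have hS0ne : ((Sum.inl '' c₀.supp : Set (V ⊕ V)))ᶜ ≠ Set.univ := by
    intro h
    have hmem : Sum.inl v₀ ∈ ((Sum.inl '' c₀.supp : Set (V ⊕ V)))ᶜ := h ▸ Set.mem_univ _
    exact hmem ⟨v₀, (ConnectedComponent.mem_supp_iff _ _).mpr hv₀, rfl⟩
  have hS0card : (((Sum.inl '' c₀.supp : Set (V ⊕ V)))ᶜ).ncard = 2 * N - k := by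
    have h1 := Set.ncard_add_ncard_compl (Sum.inl '' c₀.supp : Set (V ⊕ V))
      (Set.toFinite _) (Set.toFinite _)
    have h2 : (Sum.inl '' c₀.supp : Set (V ⊕ V)).ncard = k := by
      rw [Set.ncard_image_of_injective _ Sum.inl_injective]
    have h3 : Nat.card (V ⊕ V) = 2 * N := by
      rw [Nat.card_eq_fintype_card, Fintype.card_sum]; ring
    omega
  have hmem : (2 * N - k) ∈ {n | ∃ S : Set (V ⊕ V), IsGeodConvex (compPrism G) S ∧
      S ≠ Set.univ ∧ S.ncard = n} :=
    ⟨_, S0_convex G hdisc' c₀, hS0ne, hS0card⟩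
  exact le_antisymm (csSup_le ⟨_, hmem⟩ hub) (le_csSup ⟨2 * N - k, fun n hn => hub n hn⟩ hmem)

theorem stmt2 {V : Type*} [Fintype V] (G : SimpleGraph V)
    (hdisc : ¬G.Preconnected)
    (c₀ : G.ConnectedComponent)
    (hmin : ∀ c : G.ConnectedComponent, c₀.supp.ncard ≤ c.supp.ncard) :
    convexityNumber (compPrism G) = 2 * Fintype.card V - c₀.supp.ncard := stmt2' G hdisc c₀ hmin
end
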